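/- Let k be an algebraically closed field of characteristic p > 0 and q a power of p. Let P_s be the (n+1)×(n+1) matrix of block form with I_s in the upper-left, E_{n-s+1} in the lower-right (E_m the m×m matrix with ones on the subdiagonal), and a nonzero row vector a of dimension s placed in row s+1 within the first s columns. If n - s + 1 is even (and s ≥ 1), then P_s ∼ W_s, where W_s = diag(I_s, E_{n-s+1}) and ∼ denotes equivalence under A ↦ ᵗT A T^(q) for T ∈ GL_{n+1}(k). -/

import Mathlib

open Matrix

/-- The matrix `W_s = diag(I_s, E_{n-s+1})`, where `E_m` is the `m × m` matrix with
`1`s on the subdiagonal: entrywise, `1`s on the diagonal in the first `s` columns and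
`1`s on the subdiagonal in columns `s, …, n-1`. -/
def Wmat (k : Type*) [Field k] (n s : ℕ) : Matrix (Fin (n + 1)) (Fin (n + 1)) k :=
  fun i j =>
    (if i = j ∧ (j : ℕ) < s then 1 else 0) +
    (if (i : ℕ) = (j : ℕ) + 1 ∧ s ≤ (j : ℕ) then 1 else 0)

/-- The matrix `P_s`: `W_s = diag(I_s, E_{n-s+1})` with the nonzero row vector `a`
placed in the first `s` entries of row `s`. -/
def Pmat (k : Type*) [Field k] (n s : ℕ) (a : Fin (n + 1) → k) :
    Matrix (Fin (n + 1)) (Fin (n + 1)) k :=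
  fun i j => Wmat k n s i j + (if (i : ℕ) = s ∧ (j : ℕ) < s then a j else 0)

set_option linter.unusedSectionVars false
set_option linter.unusedVariables false
set_option linter.unusedTactic false

section helpers

variable {k : Type*} [Field k] {m' : Type*} [Fintype m'] [DecidableEq m']

lemma vecMulVec_mul' (a b : m' → k) (M : Matrix m' m' k) :
    vecMulVec a b * M = vecMulVec a (b ᵥ* M) := by
  ext i j
  simp only [mul_apply, vecMulVec_apply, vecMul, dotProduct, Finset.mul_sum, mul_assoc]

lemma mul_vecMulVec' (M : Matrix m' m' k) (a b : m' → k) :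
    M * vecMulVec a b = vecMulVec (M *ᵥ a) b := by
  ext i j
  simp only [mul_apply, vecMulVec_apply, mulVec, dotProduct, Finset.sum_mul, mul_assoc]

lemma vecMul_vecMulVec' (x a b : m' → k) :
    x ᵥ* vecMulVec a b = (x ⬝ᵥ a) • b := by
  ext j
  simp only [vecMul, dotProduct, vecMulVec_apply, Pi.smul_apply, smul_eq_mul,
    Finset.sum_mul, mul_assoc]

lemma vecMulVec_mulVec' (a b x : m' → k) :
    vecMulVec a b *ᵥ x = (b ⬝ᵥ x) • a := by
  ext i
  simp only [mulVec, dotProduct, vecMulVec_apply, Pi.smul_apply, smul_eq_mul,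
    Finset.mul_sum, mul_assoc]
  rw [Finset.sum_mul]
  exact Finset.sum_congr rfl fun _ _ => by ring

lemma vecMulVec_transpose' (a b : m' → k) : (vecMulVec a b)ᵀ = vecMulVec b a := by
  ext i j; simp [vecMulVec_apply, mul_comm]

lemma map_one_add_vecMulVec (φ : k →+* k) (a b : m' → k) :
    (1 + vecMulVec a b).map φ = 1 + vecMulVec (φ ∘ a) (φ ∘ b) := by
  ext i j
  simp [Matrix.map_apply, Matrix.add_apply, Matrix.one_apply, vecMulVec_apply,
    apply_ite φ, _root_.map_add, _root_.map_mul, _root_.map_one, _root_.map_zero]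

lemma map_one_sub_vecMulVec (φ : k →+* k) (a b : m' → k) :
    (1 - vecMulVec a b).map φ = 1 - vecMulVec (φ ∘ a) (φ ∘ b) := by
  ext i j
  simp [Matrix.map_apply, Matrix.sub_apply, Matrix.one_apply, vecMulVec_apply,
    apply_ite φ, _root_.map_sub, _root_.map_mul, _root_.map_one, _root_.map_zero]

lemma step_trans (φ : k →+* k) (A B C T S : Matrix m' m' k)
    (h1 : Tᵀ * A * T.map φ = B) (h2 : Sᵀ * B * S.map φ = C) :
    (T * S)ᵀ * A * (T * S).map φ = C := by
  rw [transpose_mul, Matrix.map_mul, ← h2, ← h1]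
  noncomm_ring

end helpers

section WmatLemmas
variable {k : Type*} [Field k] {n s : ℕ}

lemma W_mulVec_supp (v : Fin (n+1) → k) (hv : ∀ j : Fin (n+1), s ≤ (j:ℕ) → v j = 0) :
    Wmat k n s *ᵥ v = v := by
  ext i
  rw [mulVec, dotProduct, Finset.sum_eq_single i]
  · have h0 : ¬ ((i:ℕ) = (i:ℕ) + 1 ∧ s ≤ (i:ℕ)) := by omega
    rcases lt_or_ge (i:ℕ) s with h|h
    · simp [Wmat, h, h0]
    · simp [Wmat, Nat.not_lt.mpr h, h0, hv i h]
  · intro j _ hj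
    rcases lt_or_ge (j:ℕ) s with h|h
    · simp [Wmat, Ne.symm hj, Nat.not_le.mpr h]
    · simp [Wmat, hv j h]
  · simp

lemma vecMul_W_supp (v : Fin (n+1) → k) (hv : ∀ j : Fin (n+1), s ≤ (j:ℕ) → v j = 0) :
    v ᵥ* Wmat k n s = v := by
  ext j
  rw [vecMul, dotProduct, Finset.sum_eq_single j]
  · rcases lt_or_ge (j:ℕ) s with h|h
    · simp [Wmat, h, Nat.not_le.mpr h]
    · have h0 : ¬ ((j:ℕ) = (j:ℕ) + 1) := by omega
      simp [Wmat, Nat.not_lt.mpr h, h0, hv j h]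
  · intro i _ hi
    rcases Nat.lt_or_ge (i:ℕ) s with h|h
    · have h2 : ¬ ((i:ℕ) = (j:ℕ) + 1 ∧ s ≤ (j:ℕ)) := by
        rintro ⟨h3, h4⟩
        omega
      simp [Wmat, hi, h2]
    · simp [Wmat, hi, hv i h]
  · simp

lemma W_mulVec_single (r r' : Fin (n+1)) (hr : s ≤ (r:ℕ)) (h1 : (r':ℕ) = (r:ℕ) + 1) :
    Wmat k n s *ᵥ Pi.single r (1:k) = Pi.single r' 1 := by
  ext i
  rw [mulVec, dotProduct, Finset.sum_eq_single r]
  · rw [Pi.single_eq_same, mul_one]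
    have h2 : ¬ (i = r ∧ (r:ℕ) < s) := by rintro ⟨_, hh⟩; omega
    simp only [Wmat, if_neg h2, zero_add, Pi.single_apply]
    have h3 : ((i:ℕ) = (r:ℕ) + 1 ∧ s ≤ (r:ℕ)) ↔ i = r' := by
      rw [Fin.ext_iff]
      constructor
      · rintro ⟨a, _⟩; omega
      · intro a; omega
    simp [h3]
  · intro j _ hj
    simp [Pi.single_apply, hj]
  · simp

lemma W_mulVec_single_last (r : Fin (n+1)) (hr : s ≤ (r:ℕ)) (h1 : (r:ℕ) = n) :
    Wmat k n s *ᵥ Pi.single r (1:k) = 0 := by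
  ext i
  rw [mulVec, dotProduct, Finset.sum_eq_single r]
  · have h2 : ¬ (i = r ∧ (r:ℕ) < s) := by rintro ⟨_, hh⟩; omega
    have h3 : ¬ ((i:ℕ) = (r:ℕ) + 1 ∧ s ≤ (r:ℕ)) := by
      rintro ⟨hh, _⟩
      have := Fin.is_le i
      omega
    simp [Wmat, h2, h3]
  · intro j _ hj
    simp [Pi.single_apply, hj]
  · simp

lemma single_vecMul_W (r r' : Fin (n+1)) (hr : s ≤ (r:ℕ)) (h1 : (r':ℕ) = (r:ℕ) + 1) :
    Pi.single r' (1:k) ᵥ* Wmat k n s = Pi.single r 1 := by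
  ext j
  rw [vecMul, dotProduct, Finset.sum_eq_single r']
  · rw [Pi.single_eq_same, one_mul]
    have h2 : ¬ ((r':ℕ) < s) := by omega
    have h4 : ¬ (r' = j ∧ (j:ℕ) < s) := by
      rintro ⟨hh, hh2⟩
      have := congrArg Fin.val hh
      omega
    simp only [Wmat, if_neg h4, zero_add, Pi.single_apply]
    have h3 : ((r':ℕ) = (j:ℕ) + 1 ∧ s ≤ (j:ℕ)) ↔ j = r := by
      rw [Fin.ext_iff]
      constructor
      · rintro ⟨a, _⟩; omega
      · intro a; omega
    simp [h3]
  · intro i _ hi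
    simp [Pi.single_apply, hi]
  · simp
lemma vecMulVec_zero_left (b : Fin (n+1) → k) : vecMulVec (0 : Fin (n+1) → k) b = 0 := by
  ext i j; simp [vecMulVec_apply]

lemma map_single (φ : k →+* k) (r : Fin (n+1)) : φ ∘ (Pi.single r (1:k)) = Pi.single r 1 := by
  ext j; simp [Pi.single_apply, apply_ite φ]

lemma single_apply_ne (r j : Fin (n+1)) (h : (j:ℕ) ≠ (r:ℕ)) : (Pi.single r (1:k) : Fin (n+1) → k) j = 0 := by
  rw [Pi.single_apply, if_neg]
  intro hh
  exact h (congrArg Fin.val hh)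

lemma det_one_sub_vmv (v : Fin (n+1) → k) (r : Fin (n+1)) (hv : v r = 0) :
    (1 - vecMulVec v (Pi.single r 1)).det = 1 := by
  have h : (1 : Matrix (Fin (n+1)) (Fin (n+1)) k) - vecMulVec v (Pi.single r 1)
      = 1 + replicateCol Unit (-v) * replicateRow Unit (Pi.single r (1:k)) := by
    rw [← vecMulVec_eq]
    ext i j; simp [vecMulVec_apply]; ring
  rw [h, det_one_add_replicateCol_mul_replicateRow, single_dotProduct]
  simp [hv]

lemma det_one_add_vmv (w : Fin (n+1) → k) (r : Fin (n+1)) (hw : w r = 0) :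
    (1 + vecMulVec (Pi.single r 1) w).det = 1 := by
  rw [vecMulVec_eq Unit, det_one_add_replicateCol_mul_replicateRow, dotProduct_single, hw]
  ring

lemma step1 (r : Fin (n+1)) (hr : s ≤ (r:ℕ)) (v : Fin (n+1) → k)
    (hv : ∀ j : Fin (n+1), s ≤ (j:ℕ) → v j = 0) (φ : k →+* k) :
    (1 - vecMulVec v (Pi.single r 1))ᵀ * (Wmat k n s + vecMulVec (Pi.single r 1) v) *
      ((1 - vecMulVec v (Pi.single r 1)).map φ)
    = Wmat k n s - vecMulVec (φ ∘ v) (Pi.single r 1) := by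
  have hφv : ∀ j : Fin (n+1), s ≤ (j:ℕ) → (φ ∘ v) j = 0 := fun j hj => by
    simp [hv j hj]
  rw [map_one_sub_vecMulVec, _root_.map_single, transpose_sub, transpose_one, vecMulVec_transpose']
  have expand : (1 - vecMulVec (Pi.single r 1) v) * (Wmat k n s + vecMulVec (Pi.single r 1) v)
        * (1 - vecMulVec (φ ∘ v) (Pi.single r 1))
      = (Wmat k n s + vecMulVec (Pi.single r 1) v)
        - vecMulVec (Pi.single r 1) v * (Wmat k n s + vecMulVec (Pi.single r 1) v)
        - (Wmat k n s + vecMulVec (Pi.single r 1) v) * vecMulVec (φ ∘ v) (Pi.single r 1)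
        + vecMulVec (Pi.single r 1) v
          * ((Wmat k n s + vecMulVec (Pi.single r 1) v) * vecMulVec (φ ∘ v) (Pi.single r 1)) := by
    noncomm_ring
  have e1 : vecMulVec (Pi.single r (1:k)) v * (Wmat k n s + vecMulVec (Pi.single r 1) v)
      = vecMulVec (Pi.single r 1) v := by
    rw [vecMulVec_mul', vecMul_add, vecMul_vecMulVec', vecMul_W_supp v hv,
      dotProduct_single, hv r hr]
    simp
  have e2 : (Wmat k n s + vecMulVec (Pi.single r (1:k)) v) * vecMulVec (φ ∘ v) (Pi.single r 1)
      = vecMulVec ((φ ∘ v) + (v ⬝ᵥ (φ ∘ v)) • (Pi.single r 1 : Fin (n+1) → k)) (Pi.single r 1) := by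
    rw [mul_vecMulVec', add_mulVec, vecMulVec_mulVec', W_mulVec_supp _ hφv]
  have e3 : vecMulVec (Pi.single r (1:k)) v
        * vecMulVec ((φ ∘ v) + (v ⬝ᵥ (φ ∘ v)) • (Pi.single r 1 : Fin (n+1) → k)) (Pi.single r 1)
      = vecMulVec (Pi.single r 1) ((v ⬝ᵥ (φ ∘ v)) • (Pi.single r 1 : Fin (n+1) → k)) := by
    rw [vecMulVec_mul', vecMul_vecMulVec']
    congr 1
    rw [dotProduct_add, dotProduct_smul, dotProduct_single, hv r hr]
    simp
  rw [expand, e1, e2, e3]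
  ext i j
  simp only [Matrix.add_apply, Matrix.sub_apply, vecMulVec_apply, Pi.add_apply,
    Pi.smul_apply, smul_eq_mul]
  ring

lemma step2a (r r' r'' : Fin (n+1)) (hr : s ≤ (r:ℕ)) (h1 : (r':ℕ) = (r:ℕ) + 1)
    (h2 : (r'':ℕ) = (r:ℕ) + 2) (w : Fin (n+1) → k)
    (hw : ∀ j : Fin (n+1), s ≤ (j:ℕ) → w j = 0) (φ : k →+* k) :
    (1 + vecMulVec (Pi.single r' 1) w)ᵀ * (Wmat k n s - vecMulVec w (Pi.single r 1)) *
      ((1 + vecMulVec (Pi.single r' 1) w).map φ)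
    = Wmat k n s + vecMulVec (Pi.single r'' 1) (φ ∘ w) := by
  rw [map_one_add_vecMulVec, _root_.map_single, transpose_add, transpose_one, vecMulVec_transpose']
  have expand : (1 + vecMulVec w (Pi.single r' 1)) * (Wmat k n s - vecMulVec w (Pi.single r 1))
        * (1 + vecMulVec (Pi.single r' 1) (φ ∘ w))
      = (Wmat k n s - vecMulVec w (Pi.single r 1))
        + vecMulVec w (Pi.single r' 1) * (Wmat k n s - vecMulVec w (Pi.single r 1))
        + (Wmat k n s - vecMulVec w (Pi.single r 1)) * vecMulVec (Pi.single r' 1) (φ ∘ w)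
        + vecMulVec w (Pi.single r' 1)
          * ((Wmat k n s - vecMulVec w (Pi.single r 1)) * vecMulVec (Pi.single r' 1) (φ ∘ w)) := by
    noncomm_ring
  have e1 : vecMulVec w (Pi.single r' (1:k)) * (Wmat k n s - vecMulVec w (Pi.single r 1))
      = vecMulVec w (Pi.single r 1) := by
    rw [vecMulVec_mul', vecMul_sub, vecMul_vecMulVec', single_vecMul_W r r' hr h1,
      single_dotProduct, one_mul, hw r' (by omega)]
    simp
  have e2 : (Wmat k n s - vecMulVec w (Pi.single r (1:k))) * vecMulVec (Pi.single r' 1) (φ ∘ w)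
      = vecMulVec (Pi.single r'' 1) (φ ∘ w) := by
    rw [mul_vecMulVec', sub_mulVec, vecMulVec_mulVec',
      W_mulVec_single r' r'' (by omega) (by omega),
      single_dotProduct, one_mul, single_apply_ne r' r (by omega)]
    simp
  have e3 : vecMulVec w (Pi.single r' (1:k)) * vecMulVec (Pi.single r'' 1) (φ ∘ w) = 0 := by
    rw [vecMulVec_mul', vecMul_vecMulVec', single_dotProduct, one_mul,
      single_apply_ne r'' r' (by omega), zero_smul]
    ext i j; simp [vecMulVec_apply]
  rw [expand, e1, e2, e3]
  noncomm_ring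

lemma step2b (r r' : Fin (n+1)) (hr : s ≤ (r:ℕ)) (h1 : (r':ℕ) = (r:ℕ) + 1)
    (h2 : (r':ℕ) = n) (w : Fin (n+1) → k)
    (hw : ∀ j : Fin (n+1), s ≤ (j:ℕ) → w j = 0) (φ : k →+* k) :
    (1 + vecMulVec (Pi.single r' 1) w)ᵀ * (Wmat k n s - vecMulVec w (Pi.single r 1)) *
      ((1 + vecMulVec (Pi.single r' 1) w).map φ)
    = Wmat k n s := by
  rw [map_one_add_vecMulVec, _root_.map_single, transpose_add, transpose_one, vecMulVec_transpose']
  have expand : (1 + vecMulVec w (Pi.single r' 1)) * (Wmat k n s - vecMulVec w (Pi.single r 1))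
        * (1 + vecMulVec (Pi.single r' 1) (φ ∘ w))
      = (Wmat k n s - vecMulVec w (Pi.single r 1))
        + vecMulVec w (Pi.single r' 1) * (Wmat k n s - vecMulVec w (Pi.single r 1))
        + (Wmat k n s - vecMulVec w (Pi.single r 1)) * vecMulVec (Pi.single r' 1) (φ ∘ w)
        + vecMulVec w (Pi.single r' 1)
          * ((Wmat k n s - vecMulVec w (Pi.single r 1)) * vecMulVec (Pi.single r' 1) (φ ∘ w)) := by
    noncomm_ring
  have e1 : vecMulVec w (Pi.single r' (1:k)) * (Wmat k n s - vecMulVec w (Pi.single r 1))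
      = vecMulVec w (Pi.single r 1) := by
    rw [vecMulVec_mul', vecMul_sub, vecMul_vecMulVec', single_vecMul_W r r' hr h1,
      single_dotProduct, one_mul, hw r' (by omega)]
    simp
  have e2 : (Wmat k n s - vecMulVec w (Pi.single r (1:k))) * vecMulVec (Pi.single r' 1) (φ ∘ w)
      = 0 := by
    rw [mul_vecMulVec', sub_mulVec, vecMulVec_mulVec',
      W_mulVec_single_last r' (by omega) h2,
      single_dotProduct, one_mul, single_apply_ne r' r (by omega)]
    rw [zero_smul, sub_zero, vecMulVec_zero_left]
  rw [expand, e1, e2]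
  noncomm_ring

lemma main_ind (φ : k →+* k) (t : ℕ) :
    ∀ r : Fin (n+1), s ≤ (r:ℕ) → (r:ℕ) + 1 + 2*t = n →
    ∀ v : Fin (n+1) → k, (∀ j : Fin (n+1), s ≤ (j:ℕ) → v j = 0) →
    ∃ T : Matrix (Fin (n+1)) (Fin (n+1)) k, IsUnit T.det ∧
      Tᵀ * (Wmat k n s + vecMulVec (Pi.single r 1) v) * T.map φ = Wmat k n s := by
  induction t with
  | zero =>
    intro r hr hn v hv
    have hφv : ∀ j : Fin (n+1), s ≤ (j:ℕ) → (φ ∘ v) j = 0 := fun j hj => by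
      simp [hv j hj]
    set r' : Fin (n+1) := ⟨(r:ℕ)+1, by omega⟩ with hr'def
    have hr'v : (r':ℕ) = (r:ℕ) + 1 := rfl
    refine ⟨(1 - vecMulVec v (Pi.single r 1)) * (1 + vecMulVec (Pi.single r' 1) (φ ∘ v)),
      ?_, ?_⟩
    · rw [det_mul, det_one_sub_vmv v r (hv r hr),
        det_one_add_vmv (φ ∘ v) r' (hφv r' (by omega))]
      simp
    · exact step_trans φ _ _ _ _ _ (step1 r hr v hv φ)
        (step2b r r' hr hr'v (by omega) (φ ∘ v) hφv φ)
  | succ t ih =>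
    intro r hr hn v hv
    have hφv : ∀ j : Fin (n+1), s ≤ (j:ℕ) → (φ ∘ v) j = 0 := fun j hj => by
      simp [hv j hj]
    have hφφv : ∀ j : Fin (n+1), s ≤ (j:ℕ) → (φ ∘ (φ ∘ v)) j = 0 := fun j hj => by
      simp [hv j hj]
    set r' : Fin (n+1) := ⟨(r:ℕ)+1, by omega⟩ with hr'def
    set r'' : Fin (n+1) := ⟨(r:ℕ)+2, by omega⟩ with hr''def
    have hr'v : (r':ℕ) = (r:ℕ) + 1 := rfl
    have hr''v : (r'':ℕ) = (r:ℕ) + 2 := rfl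
    obtain ⟨T', hT'u, hT'⟩ := ih r'' (by omega) (by omega) (φ ∘ (φ ∘ v)) hφφv
    refine ⟨(1 - vecMulVec v (Pi.single r 1)) *
      ((1 + vecMulVec (Pi.single r' 1) (φ ∘ v)) * T'), ?_, ?_⟩
    · rw [det_mul, det_mul, det_one_sub_vmv v r (hv r hr),
        det_one_add_vmv (φ ∘ v) r' (hφv r' (by omega))]
      simpa using hT'u
    · exact step_trans φ _ _ _ _ _ (step1 r hr v hv φ)
        (step_trans φ _ _ _ _ _ (step2a r r' r'' hr hr'v hr''v (φ ∘ v) hφv φ) hT')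

end WmatLemmas

/-- Lemma 4(1): if `n - s + 1` is even, then `P_s ∼ W_s`. -/
theorem Pmat_equiv_Wmat_of_even (p q e n s : ℕ) (hp : p.Prime) (he : 0 < e)
    (hq : q = p ^ e) (k : Type*) [Field k] [IsAlgClosed k] [CharP k p]
    (hs : 1 ≤ s) (hsn : s ≤ n) (heven : Even (n - s + 1))
    (a : Fin (n + 1) → k) (ha : ∃ j : Fin (n + 1), (j : ℕ) < s ∧ a j ≠ 0) :
    ∃ T : Matrix (Fin (n + 1)) (Fin (n + 1)) k, IsUnit T.det ∧
      Tᵀ * Pmat k n s a * T.map (fun x => x ^ q) = Wmat k n s := by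
  haveI : Fact p.Prime := ⟨hp⟩
  let φ : k →+* k := iterateFrobenius k p e
  have hφ : (fun x : k => x ^ q) = ⇑φ := by
    funext x
    rw [hq]
    rfl
  obtain ⟨u, hu⟩ := heven
  set rs : Fin (n+1) := ⟨s, by omega⟩ with hrs
  set v : Fin (n+1) → k := fun j => if (j:ℕ) < s then a j else 0 with hv
  have hvsupp : ∀ j : Fin (n+1), s ≤ (j:ℕ) → v j = 0 := fun j hj => by
    simp only [hv]
    rw [if_neg (by omega)]
  have hP : Pmat k n s a = Wmat k n s + vecMulVec (Pi.single rs 1) v := by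
    ext i j
    simp only [Pmat, Matrix.add_apply, vecMulVec_apply, Pi.single_apply, hv]
    have h1 : i = rs ↔ (i:ℕ) = s := by rw [Fin.ext_iff]
    by_cases h2 : (i:ℕ) = s <;> by_cases h3 : (j:ℕ) < s <;>
      simp [h1, h2, h3]
  obtain ⟨T, hTu, hT⟩ := main_ind φ (u - 1) rs (le_refl s) (by
      have : (rs:ℕ) = s := rfl
      omega) v hvsupp
  exact ⟨T, hTu, by rw [hP, hφ]; exact hT⟩
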